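/- (Dynamic-range lemma) If x is K-sparse with support T, |x_i| ≥ |x_j|/γ for all i,j ∈ T, |T∩Λ^k| = l, and Φ satisfies RIP of order K with constant δ_K, then ‖Φ_{T∖Λ^k} x_{T∖Λ^k}‖₂ > √((K-l)(1-δ_K)/(K(1+δ_K))) · ‖Φ_T x_T‖₂ / γ. -/

import Mathlib

open Matrix BigOperators Finset

/-- squared Euclidean norm -/
noncomputable def n2sq {α : Type*} [Fintype α] (v : α → ℝ) : ℝ := ∑ i, (v i)^2

/-- Euclidean norm -/
noncomputable def n2 {α : Type*} [Fintype α] (v : α → ℝ) : ℝ := Real.sqrt (n2sq v)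

/-- sup norm -/
noncomputable def ninf {α : Type*} [Fintype α] (v : α → ℝ) : ℝ := ⨆ i, |v i|

/-- dot product -/
def dot {α : Type*} [Fintype α] (u v : α → ℝ) : ℝ := ∑ i, u i * v i

/-- column submatrix indexed by a finite index set -/
noncomputable def subCols {m n : ℕ} (Φ : Matrix (Fin m) (Fin n) ℝ) (I : Finset (Fin n)) :
    Matrix (Fin m) {j // j ∈ I} ℝ := Matrix.of fun i j => Φ i j.1

/-- restriction of a vector to an index set -/
def restrict {n : ℕ} (x : Fin n → ℝ) (I : Finset (Fin n)) : {j // j ∈ I} → ℝ :=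
  fun j => x j.1

/-- Moore–Penrose pseudoinverse (full column rank case) -/
noncomputable def pinv {m n : ℕ} (Φ : Matrix (Fin m) (Fin n) ℝ) (I : Finset (Fin n)) :
    Matrix {j // j ∈ I} (Fin m) ℝ :=
  ((subCols Φ I)ᵀ * subCols Φ I)⁻¹ * (subCols Φ I)ᵀ

/-- orthogonal projector onto the column span of `Φ_I` -/
noncomputable def proj {m n : ℕ} (Φ : Matrix (Fin m) (Fin n) ℝ) (I : Finset (Fin n)) :
    Matrix (Fin m) (Fin m) ℝ := subCols Φ I * pinv Φ I

/-- projector onto the orthogonal complement of the column span of `Φ_I` -/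
noncomputable def projPerp {m n : ℕ} (Φ : Matrix (Fin m) (Fin n) ℝ) (I : Finset (Fin n)) :
    Matrix (Fin m) (Fin m) ℝ := 1 - proj Φ I

/-- restricted isometry property of order `K` with constant `δ` -/
def RIP {m n : ℕ} (Φ : Matrix (Fin m) (Fin n) ℝ) (K : ℕ) (δ : ℝ) : Prop :=
  ∀ I : Finset (Fin n), I.card ≤ K → ∀ q : {j // j ∈ I} → ℝ,
    (1 - δ) * n2sq q ≤ n2sq ((subCols Φ I).mulVec q) ∧
    n2sq ((subCols Φ I).mulVec q) ≤ (1 + δ) * n2sq q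

lemma n2sq_nonneg' {α : Type*} [Fintype α] (v : α → ℝ) : 0 ≤ n2sq v :=
  Finset.sum_nonneg fun _ _ => sq_nonneg _

lemma dot_self' {α : Type*} [Fintype α] (v : α → ℝ) : dot v v = n2sq v := by
  simp [dot, n2sq, sq]

lemma dot_comm' {α : Type*} [Fintype α] (u v : α → ℝ) : dot u v = dot v u := by
  simp [dot, mul_comm]

lemma dot_add_left' {α : Type*} [Fintype α] (u v w : α → ℝ) :
    dot (u + v) w = dot u w + dot v w := by
  simp [dot, add_mul, Finset.sum_add_distrib]

lemma n2sq_expand' {α : Type*} [Fintype α] (p q : α → ℝ) (t : ℝ) :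
    n2sq (p + t • q) = n2sq p + 2*t*(dot p q) + t^2 * n2sq q := by
  simp only [n2sq, dot, Pi.add_apply, Pi.smul_apply, smul_eq_mul, Finset.mul_sum,
    ← Finset.sum_add_distrib]
  exact Finset.sum_congr rfl fun i _ => by ring

lemma linear_term_zero' (α β : ℝ) (h : ∀ t : ℝ, 0 ≤ α*t^2 + β*t) : β = 0 := by
  rcases le_or_gt α 0 with hα | hα
  · have h1 := h 1
    have h2 := h (-1)
    nlinarith
  · have h2 := h (-(β/(2*α)))
    have ht : 2*α*(-(β/(2*α))) = -β := by field_simp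
    have key : 0 ≤ -β^2 := by
      have h3 : 0 ≤ 4*α*(α*(-(β/(2*α)))^2 + β*(-(β/(2*α)))) :=
        mul_nonneg (by linarith) h2
      calc (0:ℝ) ≤ 4*α*(α*(-(β/(2*α)))^2 + β*(-(β/(2*α)))) := h3
        _ = (2*α*(-(β/(2*α))))^2 + 2*(β*(2*α*(-(β/(2*α))))) := by ring
        _ = (-β)^2 + 2*(β*(-β)) := by rw [ht]
        _ = -β^2 := by ring
    nlinarith [sq_nonneg β]

lemma sum_ite_sdiff' {β : Type*} [AddCommMonoid β] {n : ℕ} (T Λ : Finset (Fin n)) (f : Fin n → β) :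
    ∑ j ∈ T, (if j ∈ Λ then 0 else f j) = ∑ j ∈ T \ Λ, f j := by
  rw [Finset.sdiff_eq_filter, Finset.sum_filter]
  exact Finset.sum_congr rfl fun j _ => by by_cases h : j ∈ Λ <;> simp [h]


/-- dynamic-range lemma:
`‖Φ_{T∖Λ^k}x_{T∖Λ^k}‖₂ > √((K-l)(1-δ_K)/(K(1+δ_K))) ‖Φ_T x_T‖₂ / γ`. -/
theorem dynamic_range_lemma {m n K l : ℕ} (Φ : Matrix (Fin m) (Fin n) ℝ)
    (x : Fin n → ℝ) (T Λ : Finset (Fin n))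
    (hsupp : ∀ j, x j ≠ 0 ↔ j ∈ T) (hT : T.card = K)
    (hl : (T ∩ Λ).card = l) (hlK : l < K)
    (γ : ℝ) (hγ : 1 ≤ γ) (hdyn : ∀ i ∈ T, ∀ j ∈ T, |x j| ≤ γ * |x i|)
    (δ : ℝ) (hδ0 : 0 < δ) (hδ1 : δ < 1) (hRIP : RIP Φ K δ) :
    n2 ((subCols Φ (T \ Λ)).mulVec (restrict x (T \ Λ)))
      > Real.sqrt ((K - l : ℝ) * (1 - δ) / (K * (1 + δ)))
          * n2 ((subCols Φ T).mulVec (restrict x T)) / γ := by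
  by_contra hcon
  push_neg at hcon
  -- basic positivity
  have hγ0 : (0:ℝ) < γ := lt_of_lt_of_le one_pos hγ
  have hK0 : 0 < K := lt_of_le_of_lt (Nat.zero_le l) hlK
  have hKR : (0:ℝ) < K := by exact_mod_cast hK0
  have hlR : (l:ℝ) < K := by exact_mod_cast hlK
  have hKl : (0:ℝ) < (K:ℝ) - l := by linarith
  have hTne : T.Nonempty := Finset.card_pos.mp (hT ▸ hK0)
  obtain ⟨i₀, hi₀T, hmin⟩ := T.exists_min_image (fun j => |x j|) hTne
  have hμ0 : 0 < |x i₀| := abs_pos.mpr ((hsupp i₀).mpr hi₀T)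
  set μ := |x i₀| with hμdef
  clear_value μ
  have hcardS : ((T \ Λ).card : ℝ) = (K:ℝ) - l := by
    have h := Finset.card_sdiff_add_card_inter T Λ
    rw [hl, hT] at h
    have h2 : (T \ Λ).card = K - l := by omega
    rw [h2, Nat.cast_sub hlK.le]
  -- the split vectors
  set u : {j // j ∈ T} → ℝ := fun j => if (j : Fin n) ∈ Λ then 0 else x j with hu
  set w : {j // j ∈ T} → ℝ := fun j => if (j : Fin n) ∈ Λ then x j else 0 with hw
  have huvw : _root_.restrict x T = u + w := by
    funext j
    by_cases h : (j : Fin n) ∈ Λ <;> simp [_root_.restrict, hu, hw, h]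
  have hdotuw : dot u w = 0 := Finset.sum_eq_zero fun j _ => by
    by_cases h : (j : Fin n) ∈ Λ <;> simp [hu, hw, h]
  -- squared norms
  have hu_sq : n2sq u = ∑ j ∈ T \ Λ, (x j)^2 := by
    rw [hu]
    show (∑ j : {j // j ∈ T}, (if (j : Fin n) ∈ Λ then 0 else x j)^2) = _
    have e1 : (∑ j : {j // j ∈ T}, (if (j : Fin n) ∈ Λ then 0 else x j)^2)
        = ∑ j : {j // j ∈ T}, (if (j : Fin n) ∈ Λ then 0 else (x j)^2) :=
      Finset.sum_congr rfl fun j _ => by by_cases h : (j : Fin n) ∈ Λ <;> simp [h]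
    rw [e1, Finset.sum_coe_sort T (fun k => if k ∈ Λ then 0 else (x k)^2), sum_ite_sdiff']
  have hv_sq : n2sq (_root_.restrict x T) = n2sq u + n2sq w := by
    simp only [n2sq, ← Finset.sum_add_distrib]
    exact Finset.sum_congr rfl fun j _ => by
      by_cases h : (j : Fin n) ∈ Λ <;> simp [_root_.restrict, hu, hw, h]
  -- bounds on coordinates
  have ha_ge : ((K:ℝ) - l) * μ^2 ≤ n2sq u := by
    rw [hu_sq]
    have hb : (T \ Λ).card • μ^2 ≤ ∑ j ∈ T \ Λ, (x j)^2 := by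
      apply Finset.card_nsmul_le_sum
      intro j hj
      have hjT := (Finset.mem_sdiff.mp hj).1
      have h1 := hmin j hjT
      rw [← sq_abs (x j)]
      rw [hμdef] at h1 ⊢
      exact pow_le_pow_left₀ (abs_nonneg _) h1 2
    rw [nsmul_eq_mul, hcardS] at hb
    exact hb
  have ha0 : 0 < n2sq u := lt_of_lt_of_le (by positivity) ha_ge
  have hv_le : n2sq (_root_.restrict x T) ≤ (K:ℝ) * γ^2 * μ^2 := by
    have h1 : n2sq (_root_.restrict x T) = ∑ j ∈ T, (x j)^2 :=
      Finset.sum_coe_sort T (fun k => (x k)^2)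
    have hb : ∑ j ∈ T, (x j)^2 ≤ T.card • ((γ*μ)^2) := by
      apply Finset.sum_le_card_nsmul
      intro j hj
      have h2 := hdyn i₀ hi₀T j hj
      rw [← sq_abs (x j), hμdef]
      exact pow_le_pow_left₀ (abs_nonneg _) h2 2
    rw [nsmul_eq_mul, hT] at hb
    rw [h1]
    calc ∑ j ∈ T, (x j)^2 ≤ (K:ℝ) * (γ*μ)^2 := hb
      _ = (K:ℝ) * γ^2 * μ^2 := by ring
  -- identify LHS with the T-indexed vector
  have key1 : (subCols Φ (T \ Λ)).mulVec (_root_.restrict x (T \ Λ))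
      = (subCols Φ T).mulVec u := by
    funext i
    show (∑ j : {j // j ∈ T \ Λ}, Φ i j.1 * x j.1) = ∑ j : {j // j ∈ T}, Φ i j.1 * u j
    have e2 : (∑ j : {j // j ∈ T}, Φ i j.1 * u j)
        = ∑ j : {j // j ∈ T}, (if (j : Fin n) ∈ Λ then 0 else Φ i j.1 * x j.1) :=
      Finset.sum_congr rfl fun j _ => by by_cases h : (j : Fin n) ∈ Λ <;> simp [hu, h]
    rw [e2, Finset.sum_coe_sort (T \ Λ) (fun k => Φ i k * x k),
      Finset.sum_coe_sort T (fun k => if k ∈ Λ then 0 else Φ i k * x k), sum_ite_sdiff']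
  clear_value u w
  -- RIP facts
  have hripT := fun q => hRIP T hT.le q
  set A := n2sq ((subCols Φ T).mulVec u) with hAdef
  set B := n2sq ((subCols Φ T).mulVec (_root_.restrict x T)) with hBdef
  have h5 : (1-δ) * n2sq u ≤ A := (hripT u).1
  have h2 : B ≤ (1+δ) * n2sq (_root_.restrict x T) := (hripT (_root_.restrict x T)).2
  have hA0 : 0 ≤ A := n2sq_nonneg' _
  have hB0 : 0 ≤ B := n2sq_nonneg' _
  -- squaring the contradiction hypothesis
  have hc0 : 0 ≤ ((K:ℝ) - l) * (1 - δ) / (K * (1 + δ)) := by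
    apply div_nonneg (mul_nonneg hKl.le (by linarith))
    positivity
  have hsq : A ≤ (((K:ℝ) - l) * (1 - δ) / (K * (1 + δ))) * B / γ^2 := by
    rw [key1] at hcon
    simp only [n2] at hcon
    rw [← hAdef, ← hBdef] at hcon
    have hp := pow_le_pow_left₀ (Real.sqrt_nonneg A) hcon 2
    rw [Real.sq_sqrt hA0, div_pow, mul_pow, Real.sq_sqrt hc0, Real.sq_sqrt hB0] at hp
    exact hp
  set a := n2sq u with ha
  set s := n2sq (_root_.restrict x T) with hs
  set D := (K:ℝ) * (1 + δ) with hD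
  have hD0 : 0 < D := by rw [hD]; positivity
  have hmain : A * (D * γ^2) ≤ ((K:ℝ) - l) * (1 - δ) * B := by
    have e : (((K:ℝ) - l) * (1 - δ) / (K * (1 + δ))) * B / γ^2
        = (((K:ℝ) - l) * (1 - δ) * B) / (D * γ^2) := by
      rw [hD]
      field_simp
    rw [e] at hsq
    exact (le_div_iff₀ (by positivity)).mp hsq
  clear_value D
  -- the equality chain
  have p1 : ((K:ℝ) - l) * (1 - δ) * B ≤ ((K:ℝ) - l) * (1 - δ) * ((1+δ) * s) :=
    mul_le_mul_of_nonneg_left h2 (mul_nonneg hKl.le (by linarith))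
  have p2 : ((K:ℝ) - l) * (1 - δ) * ((1+δ) * s)
      ≤ ((K:ℝ) - l) * (1 - δ) * ((1+δ) * ((K:ℝ) * γ^2 * μ^2)) :=
    mul_le_mul_of_nonneg_left (mul_le_mul_of_nonneg_left hv_le (by linarith))
      (mul_nonneg hKl.le (by linarith))
  have ering : ((K:ℝ) - l) * (1 - δ) * ((1+δ) * ((K:ℝ) * γ^2 * μ^2))
      = D * γ^2 * ((1-δ) * (((K:ℝ) - l) * μ^2)) := by rw [hD]; ring
  have p3 : D * γ^2 * ((1-δ) * (((K:ℝ) - l) * μ^2)) ≤ D * γ^2 * ((1-δ) * a) :=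
    mul_le_mul_of_nonneg_left (mul_le_mul_of_nonneg_left ha_ge (by linarith))
      (by positivity)
  have p4 : D * γ^2 * ((1-δ) * a) ≤ D * γ^2 * A :=
    mul_le_mul_of_nonneg_left h5 (by positivity)
  have hDγ : (0:ℝ) < D * γ^2 := by positivity
  clear_value A B a s
  clear hsq hcon key1 hripT hu_sq hv_sq hv_le
  have hAeq : A = (1-δ) * a := by
    have hchain : A * (D * γ^2) ≤ ((1-δ) * a) * (D * γ^2) := by
      have := le_trans hmain (le_trans p1 (le_trans p2 (ering ▸ p3)))
      linarith
    exact le_antisymm (le_of_mul_le_mul_right hchain hDγ) h5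
  have hBeq : B = (1+δ) * s := by
    have hKl1 : (0:ℝ) < ((K:ℝ) - l) * (1 - δ) := mul_pos hKl (by linarith)
    have hchain : (((K:ℝ) - l) * (1 - δ)) * ((1+δ) * s) ≤ (((K:ℝ) - l) * (1 - δ)) * B := by
      have c1 : ((K:ℝ) - l) * (1 - δ) * ((1+δ) * s) ≤ D * γ^2 * A :=
        le_trans p2 (le_trans (le_of_eq ering) (le_trans p3 p4))
      have c2 : D * γ^2 * A ≤ ((K:ℝ) - l) * (1 - δ) * B := by linarith [hmain]
      linarith
    exact le_antisymm h2 (le_of_mul_le_mul_left hchain hKl1)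
  clear hmain p1 p2 p3 p4 ering h5 h2
  -- equality analysis: first-order conditions
  set Φu := (subCols Φ T).mulVec u with hΦu
  set Φw := (subCols Φ T).mulVec w with hΦw
  set Φv := (subCols Φ T).mulVec (_root_.restrict x T) with hΦv
  have hripT := fun q => hRIP T hT.le q
  have hgl : ∀ t : ℝ, (1-δ) * n2sq (u + t • w) ≤ n2sq ((subCols Φ T).mulVec (u + t • w)) :=
    fun t => (hripT (u + t • w)).1
  have hgu : ∀ t : ℝ, n2sq ((subCols Φ T).mulVec ((_root_.restrict x T) + t • u))
      ≤ (1+δ) * n2sq ((_root_.restrict x T) + t • u) :=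
    fun t => (hripT ((_root_.restrict x T) + t • u)).2
  have hΦvuw : Φv = Φu + Φw := by rw [hΦv, huvw, Matrix.mulVec_add]
  clear_value Φu Φw Φv
  have hP : dot Φu Φw = 0 := by
    have hz := linear_term_zero' (n2sq Φw - (1-δ) * n2sq w) (2 * dot Φu Φw) ?_
    · linarith
    intro t
    have hg := hgl t
    rw [Matrix.mulVec_add, Matrix.mulVec_smul] at hg
    rw [n2sq_expand', n2sq_expand'] at hg
    rw [hdotuw, ← hΦu, ← hΦw, ← hAdef, ← ha, hAeq] at hg
    linarith only [hg]
  have hQ : (1+δ) * a = A := by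
    have hz := linear_term_zero' ((1+δ) * a - A)
        (2 * ((1+δ) * dot (_root_.restrict x T) u - dot Φv Φu)) ?_
    · have hdvu : dot (_root_.restrict x T) u = a := by
        rw [huvw, dot_add_left', dot_self', dot_comm' w u, hdotuw, ← ha]
        ring
      have hdΦvu : dot Φv Φu = A := by
        rw [hΦvuw, dot_add_left', dot_self', dot_comm' Φw Φu, hP, ← hAdef]
        ring
      rw [hdvu, hdΦvu] at hz
      linarith
    intro t
    have hg := hgu t
    rw [Matrix.mulVec_add, Matrix.mulVec_smul] at hg
    rw [n2sq_expand', n2sq_expand'] at hg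
    rw [← hΦv, ← hΦu, ← hAdef, ← ha, ← hs, ← hBdef, hBeq] at hg
    linarith only [hg]
  -- contradiction: (1+δ)a = A = (1-δ)a with a > 0, δ > 0
  rw [hAeq] at hQ
  have hda := mul_pos hδ0 ha0
  linarith only [hQ, hda]
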